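/- Let g be differentiable and suppose G vanishes on the focal curve of g. For f(x) = g(c·x) with c ≠ 0, every point (x, y) of the focal curve of f with 1 + (c - 1)x ≠ 0 (equivalently 1 - (1 - c)x ≠ 0) satisfies G(cx/(1 + (c - 1)x), cy/(1 + (c - 1)x)) = 0. -/

import Mathlib

/-- If `G` vanishes on the focal curve of `g`, then for `f x = g (c * x)` with
`c ≠ 0`, every focal point `(x, y)` of `f` with `1 + (c - 1)x ≠ 0` satisfies
`G (c*x/(1 + (c-1)*x), c*y/(1 + (c-1)*x)) = 0`. -/
theorem stmt_12 (g : ℝ → ℝ) (hg : Differentiable ℝ g) (G : ℝ × ℝ → ℝ)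
    (hG : ∀ t : ℝ, deriv g t ≠ 1 →
      G (1 / (1 - deriv g t), (g t - t * deriv g t) / (1 - deriv g t)) = 0)
    (c : ℝ) (hc : c ≠ 0) (f : ℝ → ℝ) (hf : ∀ x, f x = g (c * x))
    (t : ℝ) (ht : deriv f t ≠ 1)
    (hx : 1 + (c - 1) * (1 / (1 - deriv f t)) ≠ 0) :
    let x := 1 / (1 - deriv f t)
    let y := (f t - t * deriv f t) / (1 - deriv f t)
    G (c * x / (1 + (c - 1) * x), c * y / (1 + (c - 1) * x)) = 0 := by
  intro x y
  have hfe : f = fun u => g (c * u) := funext hf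
  have hder : HasDerivAt f (deriv g (c * t) * c) t := by
    rw [hfe]
    have h1 : HasDerivAt (fun u : ℝ => c * u) c t := by simpa using (hasDerivAt_id t).const_mul c
    exact (hg (c * t)).hasDerivAt.comp t h1
  have hft : deriv f t = c * deriv g (c * t) := by
    rw [hder.deriv]; ring
  set d := deriv g (c * t) with hd
  have hcd : 1 - c * d ≠ 0 := by
    intro h; apply ht; rw [hft]; linarith
  have hd1 : d ≠ 1 := by
    intro h
    apply hx
    have hc1 : 1 - c ≠ 0 := by
      intro h2; apply ht; rw [hft, h, mul_one]; linarith
    simp only [hft, h, mul_one]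
    field_simp
    ring
  have key := hG (c * t) hd1
  have hd1' : 1 - d ≠ 0 := sub_ne_zero.mpr (fun h => hd1 h.symm)
  have hx1 : 1 + (c - 1) * x = c * (1 - d) / (1 - c * d) := by
    simp only [x, hft]
    field_simp
    ring
  have hxne : (1 : ℝ) + (c - 1) * x ≠ 0 := hx
  have e1 : c * x / (1 + (c - 1) * x) = 1 / (1 - d) := by
    rw [hx1]; simp only [x, hft]
    field_simp
  have e2 : c * y / (1 + (c - 1) * x) = (g (c * t) - (c * t) * d) / (1 - d) := by
    rw [hx1]; simp only [y, x, hft, hf t]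
    field_simp
  rw [e1, e2]
  exact key
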